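/- For any equivariant sheaf (r : R → X_T, ρ) on the topological groupoid G_T ⇉ X_T, the projection π₂ : G_T ×_{X_T} R → R, ((M,N,f), x) ↦ x, is an open map. -/

import Mathlib

open FirstOrder FirstOrder.Language Set Topology

universe u v w x

variable {L : FirstOrder.Language.{u, v}} {α : Type w}

/-- A model of `T` whose carrier is a subset of `α`: an element of the set `X_T` of
small models of `T`. -/
structure SmallModel (L : FirstOrder.Language.{u, v}) (α : Type w) (T : L.Theory) where
  carrier : Set α
  struc : L.Structure carrier
  models : @FirstOrder.Language.Theory.Model L carrier struc T

/-- `M.Sat φ v` means that the formula `φ` is realized in the small model `M`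
at the valuation `v`. -/
def SmallModel.Sat {T : L.Theory} (M : SmallModel L α T) {ι : Type*}
    (φ : L.Formula ι) (v : ι → M.carrier) : Prop :=
  letI := M.struc
  φ.Realize v

/-- The basic open set `⟨φ, b⟩ ⊆ X_T`. -/
def XBasic {T : L.Theory} {n : ℕ} (φ : L.Formula (Fin n)) (b : Fin n → α) :
    Set (SmallModel L α T) :=
  {M | ∃ h : ∀ i, b i ∈ M.carrier, M.Sat φ fun i => ⟨b i, h i⟩}

/-- The logical topology on `X_T`, generated by the sets `⟨φ, b⟩`. -/
instance SmallModel.instTopologicalSpace {T : L.Theory} :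
    TopologicalSpace (SmallModel L α T) :=
  TopologicalSpace.generateFrom
    {U | ∃ (n : ℕ) (φ : L.Formula (Fin n)) (b : Fin n → α), U = XBasic φ b}

/-- Isomorphisms of `L`-structures between two small models. -/
abbrev StrEquiv {T : L.Theory} (A B : SmallModel L α T) : Type _ :=
  @FirstOrder.Language.Equiv L A.carrier B.carrier A.struc B.struc

/-- The underlying function of an isomorphism of small models. -/
def StrEquiv.fn {T : L.Theory} {A B : SmallModel L α T} (f : StrEquiv A B) :
    A.carrier → B.carrier :=
  (@FirstOrder.Language.Equiv.toEquiv L A.carrier B.carrier A.struc B.struc f)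

/-- Composition of isomorphisms of small models. -/
def StrEquiv.comp {T : L.Theory} {A B C : SmallModel L α T}
    (g : StrEquiv B C) (f : StrEquiv A B) : StrEquiv A C :=
  letI := A.struc; letI := B.struc; letI := C.struc
  FirstOrder.Language.Equiv.comp g f

/-- An element of `G_T`: a triple `(M, N, f)` with `M, N ∈ X_T` and `f : M ≅ N` an
isomorphism of `L`-structures. -/
structure ModelIso (L : FirstOrder.Language.{u, v}) (α : Type w) (T : L.Theory) where
  src : SmallModel L α T
  tgt : SmallModel L α T
  iso : StrEquiv src tgt

/-- The basic open set `⟨a ↦ b⟩ ⊆ G_T`. -/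
def GMapsTo {T : L.Theory} (a b : α) : Set (ModelIso L α T) :=
  {g | ∃ h : a ∈ g.src.carrier, (StrEquiv.fn g.iso ⟨a, h⟩ : α) = b}

/-- The logical topology on `G_T`, generated by the sets `s⁻¹⟨φ, b⟩`, `t⁻¹⟨φ, b⟩` and
`⟨a ↦ b⟩`. -/
instance ModelIso.instTopologicalSpace {T : L.Theory} :
    TopologicalSpace (ModelIso L α T) :=
  TopologicalSpace.generateFrom
    ({U | ∃ (n : ℕ) (φ : L.Formula (Fin n)) (b : Fin n → α),
        U = ModelIso.src ⁻¹' XBasic φ b} ∪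
     {U | ∃ (n : ℕ) (φ : L.Formula (Fin n)) (b : Fin n → α),
        U = ModelIso.tgt ⁻¹' XBasic φ b} ∪
     {U | ∃ a b : α, U = GMapsTo (T := T) a b})

/-- The identity arrow of `G_T` at a model `M`. -/
def ModelIso.idIso {T : L.Theory} (M : SmallModel L α T) : ModelIso L α T :=
  ⟨M, M, letI := M.struc; FirstOrder.Language.Equiv.refl L M.carrier⟩

/-- The inverse of an arrow of `G_T`. -/
def ModelIso.invIso {T : L.Theory} (g : ModelIso L α T) : ModelIso L α T :=
  ⟨g.tgt, g.src, letI := g.src.struc; letI := g.tgt.struc;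
    FirstOrder.Language.Equiv.symm g.iso⟩

/-- An equivariant sheaf `(r : R → X_T, ρ)` on the topological groupoid `G_T ⇉ X_T`:
a local homeomorphism `r` into `X_T` together with a continuous action `ρ` of `G_T`. -/
structure EquivSheaf (L : FirstOrder.Language.{u, v}) (α : Type w) (T : L.Theory) where
  /-- The total space. -/
  R : Type x
  [topR : TopologicalSpace R]
  /-- The projection to the space of models. -/
  r : R → SmallModel L α T
  isLocalHomeomorph_r : IsLocalHomeomorph r
  /-- The action `ρ : G_T ×_{X_T} R → R`, defined on the set of pairs `((M,N,f), z)`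
  with `r z = M`, topologized as a subspace of the product. -/
  act : {q : ModelIso L α T × R // r q.2 = q.1.src} → R
  continuous_act : Continuous act
  r_act : ∀ q, r (act q) = q.1.1.tgt
  act_id : ∀ z : R, act ⟨(ModelIso.idIso (r z), z), rfl⟩ = z
  act_comp : ∀ (A B C : SmallModel L α T) (f : StrEquiv A B) (g : StrEquiv B C)
      (z : R) (hz : r z = A),
    act ⟨((⟨B, C, g⟩ : ModelIso L α T),
          act ⟨((⟨A, B, f⟩ : ModelIso L α T), z), hz⟩), r_act _⟩ =
      act ⟨((⟨A, C, StrEquiv.comp g f⟩ : ModelIso L α T), z), hz⟩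

attribute [instance] EquivSheaf.topR


section AuxLemmas
variable {T : L.Theory}

lemma isOpen_xBasic {n : ℕ} (φ : L.Formula (Fin n)) (b : Fin n → α) :
    IsOpen (XBasic (T := T) φ b) :=
  TopologicalSpace.GenerateOpen.basic _ ⟨n, φ, b, rfl⟩

lemma isOpen_carrierMem (a : α) :
    IsOpen {M : SmallModel L α T | a ∈ M.carrier} := by
  have h : {M : SmallModel L α T | a ∈ M.carrier}
      = XBasic (⊤ : L.Formula (Fin 1)) (fun _ => a) := by
    ext M
    constructor
    · intro ha
      refine ⟨fun _ => ha, ?_⟩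
      letI := M.struc
      exact Formula.realize_top.2 trivial
    · rintro ⟨h, -⟩
      exact h 0
  rw [h]; exact isOpen_xBasic _ _

lemma SmallModel.sat_map {A B : SmallModel L α T} (f : StrEquiv A B) {ι : Type*}
    (φ : L.Formula ι) (v : ι → A.carrier) :
    A.Sat φ v ↔ B.Sat φ (fun i => StrEquiv.fn f (v i)) := by
  letI := A.struc; letI := B.struc
  exact (StrongHomClass.realize_formula f φ (v := v)).symm

lemma exists_perm_extend {S : Set α} (hS : S.Finite) {p : α → α} (hp : Set.InjOn p S) :
    ∃ π : Equiv.Perm α, ∀ x ∈ S, π x = p x := by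
  classical
  let f : S ↪ α := ⟨fun x => p x, fun a b hab => Subtype.ext (hp a.2 b.2 hab)⟩
  cases finite_or_infinite α with
  | inl hfin =>
    obtain ⟨g, hg⟩ := Cardinal.extend_function_finite f ⟨Equiv.refl α⟩
    exact ⟨g, fun x hx => hg ⟨x, hx⟩⟩
  | inr hinf =>
    have hcard : Cardinal.mk S < Cardinal.mk α := by
      haveI := hS.to_subtype
      exact lt_of_lt_of_le (Cardinal.lt_aleph0_of_finite _) (Cardinal.aleph0_le_mk α)
    obtain ⟨g, hg⟩ := Cardinal.extend_function_of_lt f hcard ⟨Equiv.refl α⟩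
    exact ⟨g, fun x hx => hg ⟨x, hx⟩⟩

lemma exists_transport (M' : SmallModel L α T) (π : Equiv.Perm α) :
    ∃ g : ModelIso L α T, g.src = M' ∧
      ∀ (y : α) (hy : y ∈ g.src.carrier), (StrEquiv.fn g.iso ⟨y, hy⟩ : α) = π y := by
  letI := M'.struc
  haveI := M'.models
  let e := Equiv.image π M'.carrier
  letI strucN : L.Structure (π '' M'.carrier : Set α) := Equiv.inducedStructure e
  have modelsN : @Theory.Model L (π '' M'.carrier : Set α) strucN T :=
    StrongHomClass.theory_model (Equiv.inducedStructureEquiv e)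
  exact ⟨⟨M', ⟨π '' M'.carrier, strucN, modelsN⟩, Equiv.inducedStructureEquiv e⟩,
    rfl, fun y hy => rfl⟩

/-- The source map `s : G_T → X_T` is an open map. -/
lemma isOpenMap_src :
    IsOpenMap (ModelIso.src : ModelIso L α T → SmallModel L α T) := by
  classical
  intro W hW
  rw [isOpen_iff_forall_mem_open]
  rintro M ⟨g₀, hg₀W, rfl⟩
  obtain ⟨B, hBmem, hg₀B, hBW⟩ :=
    (TopologicalSpace.isTopologicalBasis_of_subbasis rfl).exists_subset_of_mem_open hg₀W hW
  obtain ⟨F, ⟨hFfin, hFsub⟩, rfl⟩ := hBmem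
  have key : ∀ F' : Set (Set (ModelIso L α T)), F'.Finite →
      F' ⊆ ({U | ∃ (n : ℕ) (φ : L.Formula (Fin n)) (b : Fin n → α),
          U = ModelIso.src ⁻¹' XBasic φ b} ∪
        {U | ∃ (n : ℕ) (φ : L.Formula (Fin n)) (b : Fin n → α),
          U = ModelIso.tgt ⁻¹' XBasic φ b} ∪
        {U | ∃ a b : α, U = GMapsTo (T := T) a b}) →
      g₀ ∈ ⋂₀ F' →
      ∃ S : Set α, S.Finite ∧ (∀ x ∈ S, x ∈ g₀.src.carrier) ∧
        ∃ V : Set (SmallModel L α T), IsOpen V ∧ g₀.src ∈ V ∧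
          ∀ g' : ModelIso L α T, g'.src ∈ V →
            (∀ (y : α) (hy : y ∈ g₀.src.carrier) (hy' : y ∈ g'.src.carrier), y ∈ S →
              (StrEquiv.fn g'.iso ⟨y, hy'⟩ : α) = StrEquiv.fn g₀.iso ⟨y, hy⟩) →
            g' ∈ ⋂₀ F' := by
    intro F' hF'fin
    induction F', hF'fin using Set.Finite.induction_on with
    | empty =>
      intro _ _
      exact ⟨∅, finite_empty, by simp, univ, isOpen_univ, mem_univ _,
        fun g' _ _ => by simp⟩
    | @insert U F₀ hUF₀ hF₀fin ih =>
      intro hsub hg₀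
      have hU := hsub (mem_insert U F₀)
      have hg₀U : g₀ ∈ U := (mem_sInter.1 hg₀) U (mem_insert U F₀)
      have hg₀F₀ : g₀ ∈ ⋂₀ F₀ :=
        mem_sInter.2 fun t ht => (mem_sInter.1 hg₀) t (mem_insert_of_mem U ht)
      obtain ⟨S₀, hS₀fin, hS₀sub, V₀, hV₀open, hg₀V₀, hV₀spec⟩ :=
        ih (fun t ht => hsub (mem_insert_of_mem U ht)) hg₀F₀
      rcases hU with (hU | hU) | hU
      · -- source condition
        obtain ⟨n, φ, b, rfl⟩ := hU
        refine ⟨S₀, hS₀fin, hS₀sub, V₀ ∩ XBasic φ b,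
          hV₀open.inter (isOpen_xBasic φ b), ⟨hg₀V₀, hg₀U⟩, ?_⟩
        intro g' hg'V hagree
        rw [sInter_insert]
        exact ⟨hg'V.2, hV₀spec g' hg'V.1 hagree⟩
      · -- target condition
        obtain ⟨n, ψ, c, rfl⟩ := hU
        obtain ⟨hc, hsat⟩ := hg₀U
        letI := g₀.src.struc; letI := g₀.tgt.struc
        set e : Fin n → g₀.src.carrier := fun i => g₀.iso.toEquiv.symm ⟨c i, hc i⟩ with he
        set eα : Fin n → α := fun i => (e i : α) with heα
        have heq : ∀ i, StrEquiv.fn g₀.iso (e i) = ⟨c i, hc i⟩ := fun i =>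
          g₀.iso.toEquiv.apply_symm_apply _
        have hmem : ∀ i, eα i ∈ g₀.src.carrier := fun i => (e i).2
        have hsub' : ∀ i, (⟨eα i, hmem i⟩ : g₀.src.carrier) = e i := fun i => Subtype.ext rfl
        refine ⟨S₀ ∪ Set.range eα, hS₀fin.union (finite_range eα), ?_,
          V₀ ∩ XBasic ψ eα, hV₀open.inter (isOpen_xBasic ψ eα), ⟨hg₀V₀, ?_⟩, ?_⟩
        · intro y hy
          rcases hy with hy | ⟨i, rfl⟩
          · exact hS₀sub y hy
          · exact hmem i
        · -- g₀.src ∈ XBasic ψ eα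
          refine ⟨hmem, ?_⟩
          refine (SmallModel.sat_map g₀.iso ψ _).2 ?_
          have hvv : (fun i => StrEquiv.fn g₀.iso ⟨eα i, hmem i⟩)
              = fun i => (⟨c i, hc i⟩ : g₀.tgt.carrier) := by
            funext i; rw [hsub' i, heq i]
          rw [hvv]
          exact hsat
        · intro g' hg'V hagree
          rw [sInter_insert]
          refine ⟨?_, hV₀spec g' hg'V.1
            (fun y hy hy' hyS => hagree y hy hy' (Or.inl hyS))⟩
          obtain ⟨h', hsat'⟩ := hg'V.2
          have hmap : ∀ i, (StrEquiv.fn g'.iso ⟨eα i, h' i⟩ : α) = c i := by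
            intro i
            rw [hagree (eα i) (hmem i) (h' i) (Or.inr ⟨i, rfl⟩)]
            rw [hsub' i, heq i]
          have hc' : ∀ i, c i ∈ g'.tgt.carrier := fun i =>
            hmap i ▸ (StrEquiv.fn g'.iso ⟨eα i, h' i⟩).2
          refine ⟨hc', ?_⟩
          have hres := (SmallModel.sat_map g'.iso ψ (fun i => ⟨eα i, h' i⟩)).1 hsat'
          have hvv : (fun i => (⟨c i, hc' i⟩ : g'.tgt.carrier))
              = fun i => StrEquiv.fn g'.iso ⟨eα i, h' i⟩ := by
            funext i; exact Subtype.ext (hmap i).symm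
          rw [hvv]
          exact hres
      · -- maps-to condition
        obtain ⟨a, d, rfl⟩ := hU
        obtain ⟨ha, hfa⟩ := hg₀U
        refine ⟨insert a S₀, hS₀fin.insert a, ?_,
          V₀ ∩ {M' | a ∈ M'.carrier}, hV₀open.inter (isOpen_carrierMem a),
          ⟨hg₀V₀, ha⟩, ?_⟩
        · intro y hy
          rcases mem_insert_iff.1 hy with rfl | hy
          · exact ha
          · exact hS₀sub y hy
        · intro g' hg'V hagree
          rw [sInter_insert]
          refine ⟨⟨hg'V.2, ?_⟩, hV₀spec g' hg'V.1
            (fun y hy hy' hyS => hagree y hy hy' (mem_insert_of_mem a hyS))⟩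
          rw [hagree a ha hg'V.2 (mem_insert a S₀)]
          exact hfa
  obtain ⟨S, hSfin, hSsub, V, hVopen, hMV, hVspec⟩ := key F hFfin hFsub hg₀B
  set p : α → α := fun y =>
    if h : y ∈ g₀.src.carrier then (StrEquiv.fn g₀.iso ⟨y, h⟩ : α) else y with hpdef
  have hpx : ∀ (y : α) (hy : y ∈ g₀.src.carrier),
      p y = (StrEquiv.fn g₀.iso ⟨y, hy⟩ : α) := fun y hy => dif_pos hy
  have hpinj : Set.InjOn p S := by
    intro y hy z hz hyz
    rw [hpx y (hSsub y hy), hpx z (hSsub z hz)] at hyz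
    letI := g₀.src.struc; letI := g₀.tgt.struc
    have := g₀.iso.toEquiv.injective (Subtype.ext hyz)
    exact congrArg Subtype.val this
  obtain ⟨π, hπ⟩ := exists_perm_extend hSfin hpinj
  refine ⟨V, ?_, hVopen, hMV⟩
  intro M' hM'V
  obtain ⟨g', hg'src, hg'fn⟩ := exists_transport M' π
  refine ⟨g', hBW (hVspec g' (by rw [hg'src]; exact hM'V) ?_), hg'src⟩
  intro y hy hy' hyS
  rw [hg'fn y hy', hπ y hyS, hpx y hy]

end AuxLemmas

/-- **The second projection of an equivariant sheaf is open**: for any equivariant sheaf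
`(r : R → X_T, ρ)` on `G_T ⇉ X_T`, the projection `π₂ : G_T ×_{X_T} R → R` is an open
map. -/
theorem equivSheaf_pi2_isOpenMap {T : L.Theory} (E : EquivSheaf.{u, v, w, x} L α T) :
    IsOpenMap (fun q : {q : ModelIso L α T × E.R // E.r q.2 = q.1.src} => q.1.2) := by
  intro W hW
  rw [isOpen_iff_forall_mem_open]
  rintro z ⟨q, hqW, rfl⟩
  obtain ⟨O, hOopen, hOW⟩ := isOpen_induced_iff.1 hW
  have hqO : (q : ModelIso L α T × E.R) ∈ O := by
    rw [← hOW] at hqW; exact hqW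
  obtain ⟨U, V, hUopen, hVopen, hqU, hqV, hUV⟩ :=
    isOpen_prod_iff.1 hOopen q.1.1 q.1.2 hqO
  refine ⟨V ∩ E.r ⁻¹' (ModelIso.src '' U), ?_,
    hVopen.inter (E.isLocalHomeomorph_r.continuous.isOpen_preimage _
      (isOpenMap_src U hUopen)), hqV, q.1.1, hqU, q.2.symm⟩
  rintro z' ⟨hz'V, g', hg'U, hg'src⟩
  refine ⟨⟨(g', z'), hg'src.symm⟩, ?_, rfl⟩
  rw [← hOW]
  exact hUV ⟨hg'U, hz'V⟩
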